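/- In the balanced two-class Gaussian model, the refinement error of the linear sigmoid model f(x) = σ(wᵀx) with respect to a proper loss ℓ whose entropy e_ℓ is symmetric about 1/2 equals E_{z∼N(0,1)}[ e_ℓ( σ( a_w (z + a_w/2) ) ) ], where a_w = ⟨w,w*⟩_Σ / ||w||_Σ. In particular, the refinement error is invariant under rescaling w ↦ s·w for any s > 0. -/

import Mathlib

open Matrix MeasureTheory ProbabilityTheory
open Real hiding sigmoid sigmoid_nonneg sigmoid_le_one sigmoid_neg
open scoped ENNReal NNReal

noncomputable section

/-- The sigmoid function. -/
def sigmoid (t : ℝ) : ℝ := 1 / (1 + Real.exp (-t))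

/-- The expertise level `a_w = ⟨w, w*⟩_Σ / ‖w‖_Σ` with `w* = 2 Σ⁻¹ μ`. -/
def expertise {p : ℕ} (S : Matrix (Fin p) (Fin p) ℝ) (μv w : Fin p → ℝ) : ℝ :=
  (w ⬝ᵥ S.mulVec ((2 : ℝ) • S⁻¹.mulVec μv)) / Real.sqrt (w ⬝ᵥ S.mulVec w)

/-- The refinement error `R_ℓ(f) = E[e_ℓ(E[Y | f(X)])]` of the linear sigmoid model
`f(x) = σ(wᵀx)`, written with `E[Y | f(X)] = E[1_{Y=1} | σ(wᵀX)] = E[1_{Y=1} | wᵀX]`. -/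
def refR {p : ℕ} {Ω : Type*} [MeasurableSpace Ω] (μ : Measure Ω)
    (X : Ω → Fin p → ℝ) (Y : Ω → ℝ) (eℓ : ℝ → ℝ) (w : Fin p → ℝ) : ℝ :=
  ∫ ω, eℓ (MeasureTheory.condExp
    (MeasurableSpace.comap (fun ω' => w ⬝ᵥ X ω') inferInstance) μ
    (fun ω' => if Y ω' = 1 then (1 : ℝ) else 0) ω) ∂μ

namespace Stmt14Aux

lemma continuous_sigmoid : Continuous sigmoid := by
  unfold sigmoid
  refine continuous_const.div (by continuity) (fun t => ?_)
  positivity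

lemma sigmoid_nonneg (t : ℝ) : 0 ≤ sigmoid t := by
  unfold sigmoid; positivity

lemma sigmoid_le_one (t : ℝ) : sigmoid t ≤ 1 := by
  unfold sigmoid
  rw [div_le_one (by positivity)]
  nlinarith [Real.exp_pos (-t)]

lemma sigmoid_neg (t : ℝ) : sigmoid (-t) = 1 - sigmoid t := by
  unfold sigmoid
  rw [neg_neg]
  have h1 : (0:ℝ) < 1 + Real.exp t := by positivity
  have h2 : (0:ℝ) < 1 + Real.exp (-t) := by positivity
  rw [Real.exp_neg] at h2 ⊢
  field_simp
  ring

lemma density_id (m v : ℝ) (hv : 0 < v) (t : ℝ) :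
    sigmoid (2 * m * t / v) *
      (gaussianPDFReal m v.toNNReal t + gaussianPDFReal (-m) v.toNNReal t)
    = gaussianPDFReal m v.toNNReal t := by
  have hvc : ((v.toNNReal : ℝ)) = v := Real.coe_toNNReal v hv.le
  unfold gaussianPDFReal sigmoid
  rw [hvc]
  have hE : rexp (-(t - -m)^2 / (2*v)) = rexp (-(t - m)^2 / (2*v)) * rexp (-(2*m*t/v)) := by
    rw [← Real.exp_add]
    congr 1
    field_simp
    ring
  rw [hE]
  have hq : (0:ℝ) < 1 + rexp (-(2*m*t/v)) := by positivity
  have hc : (0:ℝ) < √(2 * π * v) := by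
    apply Real.sqrt_pos.mpr; positivity
  field_simp

lemma integral_gauss_pdf_smul (m₀ v : ℝ) (hv : 0 < v) (B : Set ℝ) (hB : MeasurableSet B)
    (g : ℝ → ℝ) :
    ∫ t in B, g t ∂(gaussianReal m₀ v.toNNReal)
      = ∫ t in B, gaussianPDFReal m₀ v.toNNReal t * g t ∂volume := by
  have hv' : v.toNNReal ≠ 0 := by simp [Real.toNNReal_eq_zero, hv, not_le]
  rw [gaussianReal_of_var_ne_zero _ hv', restrict_withDensity hB]
  have hpdf : gaussianPDF m₀ v.toNNReal
      = fun x => ((fun x => (gaussianPDFReal m₀ v.toNNReal x).toNNReal) x : ℝ≥0∞) := rfl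
  rw [hpdf, integral_withDensity_eq_integral_smul
    ((measurable_gaussianPDFReal _ _).real_toNNReal)]
  refine setIntegral_congr_fun hB (fun t _ => ?_)
  rw [NNReal.smul_def, Real.coe_toNNReal _ (gaussianPDFReal_nonneg _ _ _), smul_eq_mul]

lemma gauss_sum (m v : ℝ) (hv : 0 < v) (B : Set ℝ) (hB : MeasurableSet B) :
    ∫ t in B, sigmoid (2*m*t/v) ∂(gaussianReal m v.toNNReal)
      + ∫ t in B, sigmoid (2*m*t/v) ∂(gaussianReal (-m) v.toNNReal)
    = ((gaussianReal m v.toNNReal) B).toReal := by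
  have hv' : v.toNNReal ≠ 0 := by simp [Real.toNNReal_eq_zero, hv, not_le]
  have hgm : Measurable fun t => sigmoid (2*m*t/v) :=
    continuous_sigmoid.measurable.comp ((measurable_id.const_mul (2*m)).div_const v)
  have hbd : ∃ C, ∀ t, ‖sigmoid (2*m*t/v)‖ ≤ C :=
    ⟨1, fun t => by
      rw [Real.norm_eq_abs, abs_of_nonneg (sigmoid_nonneg _)]
      exact sigmoid_le_one _⟩
  have hint : ∀ m₀ : ℝ, IntegrableOn
      (fun t => sigmoid (2*m*t/v) * gaussianPDFReal m₀ v.toNNReal t) B volume := by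
    intro m₀
    exact ((integrable_gaussianPDFReal m₀ v.toNNReal).bdd_mul
      hgm.aestronglyMeasurable (ae_of_all _ hbd.choose_spec)).restrict
  rw [integral_gauss_pdf_smul m v hv B hB, integral_gauss_pdf_smul (-m) v hv B hB]
  simp_rw [mul_comm (gaussianPDFReal _ _ _)]
  rw [← integral_add (hint m) (hint (-m))]
  have : ∀ t, sigmoid (2*m*t/v) * gaussianPDFReal m v.toNNReal t
      + sigmoid (2*m*t/v) * gaussianPDFReal (-m) v.toNNReal t
      = gaussianPDFReal m v.toNNReal t := by
    intro t; rw [← mul_add]; exact density_id m v hv t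
  simp_rw [this]
  rw [gaussianReal_apply_eq_integral _ hv' B, ENNReal.toReal_ofReal]
  exact setIntegral_nonneg hB (fun t _ => gaussianPDFReal_nonneg _ _ _)

lemma gauss_affine_map (m₀ v : ℝ) (hv : 0 < v) :
    Measure.map (fun z => Real.sqrt v * z + m₀) (gaussianReal 0 1)
      = gaussianReal m₀ v.toNNReal := by
  have h1 : (fun z : ℝ => Real.sqrt v * z + m₀) = (· + m₀) ∘ (fun z => Real.sqrt v * z) := rfl
  rw [h1, ← Measure.map_map (measurable_add_const m₀) (measurable_const_mul _)]
  rw [gaussianReal_map_const_mul, gaussianReal_map_add_const]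
  norm_num
  congr 1
  ext
  simp [Real.sq_sqrt hv.le, Real.coe_toNNReal v hv.le]

lemma gauss_neg_map : Measure.map (fun z : ℝ => -z) (gaussianReal 0 1) = gaussianReal 0 1 := by
  have h1 : (fun z : ℝ => -z) = (fun z => (-1 : ℝ) * z) := by funext z; ring
  rw [h1, gaussianReal_map_const_mul]
  norm_num

end Stmt14Aux

open Stmt14Aux

lemma refR_eq_aux {p : ℕ} {Ω : Type*} [MeasurableSpace Ω] {μ : Measure Ω}
    [IsProbabilityMeasure μ]
    (S : Matrix (Fin p) (Fin p) ℝ) (hS : S.PosDef) (μv : Fin p → ℝ)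
    (X : Ω → Fin p → ℝ) (Y : Ω → ℝ) (hX : Measurable X) (hY : Measurable Y)
    (hY1 : μ {ω | Y ω = 1} = 1 / 2) (hYm1 : μ {ω | Y ω = -1} = 1 / 2)
    (hpos : ∀ u : Fin p → ℝ, Measure.map (fun ω => u ⬝ᵥ X ω) (μ[|{ω | Y ω = 1}])
      = gaussianReal (u ⬝ᵥ μv) (Real.toNNReal (u ⬝ᵥ S.mulVec u)))
    (hneg : ∀ u : Fin p → ℝ, Measure.map (fun ω => u ⬝ᵥ X ω) (μ[|{ω | Y ω = -1}])
      = gaussianReal (-(u ⬝ᵥ μv)) (Real.toNNReal (u ⬝ᵥ S.mulVec u)))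
    (eℓ : ℝ → ℝ) (heℓ_meas : Measurable eℓ) (heℓ_symm : ∀ q : ℝ, eℓ q = eℓ (1 - q))
    (w : Fin p → ℝ) (hw : w ≠ 0) :
    refR μ X Y eℓ w
        = ∫ z, eℓ (sigmoid (expertise S μv w * (z + expertise S μv w / 2)))
            ∂(gaussianReal 0 1) := by
  set m : ℝ := w ⬝ᵥ μv with hmdef
  set v : ℝ := w ⬝ᵥ S.mulVec w with hvdef
  have hv : 0 < v := by
    have := hS.dotProduct_mulVec_pos hw
    simpa [hvdef] using this
  have hsv : 0 < Real.sqrt v := Real.sqrt_pos.mpr hv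
  have hvv : Real.sqrt v * Real.sqrt v = v := Real.mul_self_sqrt hv.le
  set a : ℝ := 2 * m / Real.sqrt v with hadef
  have ha : expertise S μv w = a := by
    unfold expertise
    rw [Matrix.mulVec_smul, Matrix.mulVec_mulVec,
      Matrix.mul_nonsing_inv S (isUnit_iff_ne_zero.mpr hS.det_pos.ne'),
      Matrix.one_mulVec, dotProduct_smul, smul_eq_mul]
  set T : Ω → ℝ := fun ω => w ⬝ᵥ X ω with hTdef
  have hT : Measurable T := by
    have h : T = fun ω => ∑ i, w i * X ω i := rfl
    rw [h]
    exact Finset.measurable_sum _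
      (fun i _ => measurable_const.mul ((measurable_pi_apply i).comp hX))
  set A : Set Ω := {ω | Y ω = 1} with hAdef
  set Bm : Set Ω := {ω | Y ω = -1} with hBmdef
  have hA : MeasurableSet A := hY (measurableSet_singleton 1)
  have hB : MeasurableSet Bm := hY (measurableSet_singleton (-1))
  have hABd : Disjoint A Bm := by
    rw [Set.disjoint_left]
    intro ω h1 h2
    simp only [hAdef, hBmdef, Set.mem_setOf_eq] at h1 h2
    rw [h1] at h2
    norm_num at h2
  have hcneg : μ (A ∪ Bm)ᶜ = 0 := by
    have hu : μ (A ∪ Bm) = 1 := by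
      rw [measure_union hABd hB, hY1, hYm1, ENNReal.add_halves]
    rw [measure_compl (hA.union hB) (measure_ne_top μ _), hu, measure_univ, tsub_self]
  have hμsplit : μ = μ.restrict A + μ.restrict Bm := by
    have hae : ∀ᵐ ω ∂μ, ω ∈ A ∪ Bm := by
      rw [ae_iff]
      exact hcneg
    rw [← Measure.restrict_union hABd hB, Measure.restrict_eq_self_of_ae_mem hae]
  have h2ne0 : (1/2 : ℝ≥0∞) ≠ 0 := by norm_num
  have h2net : (1/2 : ℝ≥0∞) ≠ ⊤ := by norm_num
  have h2tr : ((1/2 : ℝ≥0∞)).toReal = (1/2 : ℝ) := by norm_num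
  have hrA : μ.restrict A = (1/2 : ℝ≥0∞) • μ[|A] := by
    rw [ProbabilityTheory.cond, hY1, smul_smul, ENNReal.mul_inv_cancel h2ne0 h2net, one_smul]
  have hrB : μ.restrict Bm = (1/2 : ℝ≥0∞) • μ[|Bm] := by
    rw [ProbabilityTheory.cond, hYm1, smul_smul, ENNReal.mul_inv_cancel h2ne0 h2net, one_smul]
  set g : ℝ → ℝ := fun t => sigmoid (2 * m * t / v) with hgdef
  have hg : Measurable g :=
    continuous_sigmoid.measurable.comp ((measurable_id.const_mul (2*m)).div_const v)
  have hgb : ∀ t, ‖g t‖ ≤ 1 := by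
    intro t
    rw [hgdef]
    simp only
    rw [Real.norm_eq_abs, abs_of_nonneg (sigmoid_nonneg _)]
    exact sigmoid_le_one _
  set f : Ω → ℝ := fun ω => if Y ω = 1 then (1:ℝ) else 0 with hfdef
  have hfind : f = A.indicator (fun _ => (1:ℝ)) := by
    funext ω
    by_cases h : Y ω = 1 <;> simp [hfdef, Set.indicator_apply, h, hAdef]
  have hf_int : Integrable f μ := by
    rw [hfind]
    exact (integrable_const 1).indicator hA
  have hmle := hT.comap_le (f := T)
  haveI : SigmaFinite (μ.trim hmle) := inferInstance
  have hTm : Measurable[MeasurableSpace.comap T inferInstance] T := measurable_iff_comap_le.mpr le_rfl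
  have hgTm : Measurable[MeasurableSpace.comap T inferInstance] (fun ω => g (T ω)) := hg.comp hTm
  have hgT0 : Measurable (fun ω => g (T ω)) := hg.comp hT
  have hgTint : Integrable (fun ω => g (T ω)) μ := by
    refine (integrable_const (1:ℝ)).mono' hgT0.aestronglyMeasurable ?_
    exact ae_of_all _ (fun ω => hgb (T ω))
  -- the conditional measure computation
  have hcondA : ∀ B0 : Set ℝ, MeasurableSet B0 →
      μ.restrict A (T ⁻¹' B0) = (1/2 : ℝ≥0∞) * (gaussianReal m v.toNNReal) B0 := by
    intro B0 hB0
    rw [hrA, Measure.smul_apply, smul_eq_mul, ← Measure.map_apply hT hB0, hpos w]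
  have heq : ∀ s, MeasurableSet[MeasurableSpace.comap T inferInstance] s → μ s < ⊤ →
      ∫ x in s, g (T x) ∂μ = ∫ x in s, f x ∂μ := by
    intro s hs _
    obtain ⟨B0, hB0, rfl⟩ := hs
    have hRHS : ∫ x in T ⁻¹' B0, f x ∂μ
        = ((1/2 : ℝ≥0∞) * gaussianReal m v.toNNReal B0).toReal := by
      rw [hfind, setIntegral_indicator hA, setIntegral_const, smul_eq_mul, mul_one]
      rw [measureReal_def]
      congr 1
      rw [← Measure.restrict_apply (hT hB0)]
      exact hcondA B0 hB0
    have hi1 : Integrable (fun x => g (T x)) ((μ.restrict A).restrict (T ⁻¹' B0)) := by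
      refine (integrable_const (1:ℝ)).mono' hgT0.aestronglyMeasurable ?_
      exact ae_of_all _ (fun ω => hgb (T ω))
    have hi2 : Integrable (fun x => g (T x)) ((μ.restrict Bm).restrict (T ⁻¹' B0)) := by
      refine (integrable_const (1:ℝ)).mono' hgT0.aestronglyMeasurable ?_
      exact ae_of_all _ (fun ω => hgb (T ω))
    have hsetA : ∫ x in T ⁻¹' B0, g (T x) ∂(μ.restrict A)
        = (1/2 : ℝ) * ∫ t in B0, g t ∂(gaussianReal m v.toNNReal) := by
      rw [hrA, Measure.restrict_smul, integral_smul_measure, h2tr]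
      congr 1
      rw [← hpos w, setIntegral_map hB0 hg.aestronglyMeasurable hT.aemeasurable]
    have hsetB : ∫ x in T ⁻¹' B0, g (T x) ∂(μ.restrict Bm)
        = (1/2 : ℝ) * ∫ t in B0, g t ∂(gaussianReal (-m) v.toNNReal) := by
      rw [hrB, Measure.restrict_smul, integral_smul_measure, h2tr]
      congr 1
      rw [← hneg w, setIntegral_map hB0 hg.aestronglyMeasurable hT.aemeasurable]
    have hLHS : ∫ x in T ⁻¹' B0, g (T x) ∂μ
        = (1/2 : ℝ) * ((gaussianReal m v.toNNReal) B0).toReal := by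
      conv_lhs => rw [hμsplit]
      rw [Measure.restrict_add, integral_add_measure hi1 hi2, hsetA, hsetB, ← mul_add]
      congr 1
      exact gauss_sum m v hv B0 hB0
    rw [hLHS, hRHS, ENNReal.toReal_mul, h2tr]
  have hcond : (fun ω => g (T ω)) =ᵐ[μ] μ[f | MeasurableSpace.comap T inferInstance] :=
    ae_eq_condExp_of_forall_setIntegral_eq hmle hf_int
      (fun s _ _ => hgTint.integrableOn) heq
      (hgTm.stronglyMeasurable.aestronglyMeasurable)
  have hrefR0 : refR μ X Y eℓ w
      = ∫ ω, eℓ ((μ[f | MeasurableSpace.comap T inferInstance]) ω) ∂μ := rfl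
  have hrefR : refR μ X Y eℓ w = ∫ ω, eℓ (g (T ω)) ∂μ := by
    rw [hrefR0]
    refine integral_congr_ae ?_
    filter_upwards [hcond] with ω hω
    rw [← hω]
  -- gaussian computations
  set G : ℝ → ℝ := fun z => eℓ (sigmoid (a * (z + a / 2))) with hGdef
  have hGmeas : Measurable G := by
    rw [hGdef]
    exact heℓ_meas.comp (continuous_sigmoid.measurable.comp
      ((measurable_id.add_const (a/2)).const_mul a))
  set φp : ℝ → ℝ := fun z => Real.sqrt v * z + m with hφpdef
  set φm : ℝ → ℝ := fun z => Real.sqrt v * z + -m with hφmdef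
  have hφpm : Measurable φp := (measurable_id.const_mul _).add_const _
  have hφmm : Measurable φm := (measurable_id.const_mul _).add_const _
  have Hp : Measure.map T (μ[|A]) = Measure.map φp (gaussianReal 0 1) := by
    rw [hpos w, hφpdef, gauss_affine_map m v hv]
  have Hm : Measure.map T (μ[|Bm]) = Measure.map φm (gaussianReal 0 1) := by
    rw [hneg w, hφmdef, gauss_affine_map (-m) v hv]
  have hav : a * Real.sqrt v = 2 * m := by
    rw [hadef, div_mul_cancel₀ _ hsv.ne']
  have hptp : ∀ z, eℓ (g (φp z)) = G z := by
    intro z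
    have harg : 2 * m * (Real.sqrt v * z + m) / v = a * (z + a / 2) := by
      rw [div_eq_iff hv.ne']
      linear_combination (a*z + a^2/2) * hvv
        + (-(Real.sqrt v*z) - (2*m + a*Real.sqrt v)/2) * hav
    rw [hGdef]
    simp only [hgdef, hφpdef]
    rw [harg]
  have hptm : ∀ z, eℓ (g (φm z)) = G (-z) := by
    intro z
    have harg : 2 * m * (Real.sqrt v * z + -m) / v = -(a * (-z + a / 2)) := by
      rw [div_eq_iff hv.ne']
      linear_combination (a*z - a^2/2) * hvv
        + (-(Real.sqrt v*z) + (2*m + a*Real.sqrt v)/2) * hav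
    have h1 : eℓ (g (φm z)) = eℓ (sigmoid (-(a * (-z + a / 2)))) := by
      simp only [hgdef, hφmdef]
      rw [harg]
    rw [h1, sigmoid_neg, ← heℓ_symm]
  have hegm : AEStronglyMeasurable (fun t => eℓ (g t)) (Measure.map T (μ[|A])) :=
    (heℓ_meas.comp hg).aestronglyMeasurable
  have hegm' : ∀ (ν : Measure ℝ), AEStronglyMeasurable (fun t => eℓ (g t)) ν :=
    fun ν => (heℓ_meas.comp hg).aestronglyMeasurable
  have Ep : ∫ ω, eℓ (g (T ω)) ∂(μ[|A]) = ∫ z, G z ∂(gaussianReal 0 1) := by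
    calc ∫ ω, eℓ (g (T ω)) ∂(μ[|A])
        = ∫ t, eℓ (g t) ∂(Measure.map T (μ[|A])) :=
          (integral_map hT.aemeasurable (hegm' _)).symm
      _ = ∫ t, eℓ (g t) ∂(Measure.map φp (gaussianReal 0 1)) := by rw [Hp]
      _ = ∫ z, eℓ (g (φp z)) ∂(gaussianReal 0 1) :=
          integral_map hφpm.aemeasurable (hegm' _)
      _ = ∫ z, G z ∂(gaussianReal 0 1) := integral_congr_ae (ae_of_all _ hptp)
  have Em : ∫ ω, eℓ (g (T ω)) ∂(μ[|Bm]) = ∫ z, G z ∂(gaussianReal 0 1) := by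
    calc ∫ ω, eℓ (g (T ω)) ∂(μ[|Bm])
        = ∫ t, eℓ (g t) ∂(Measure.map T (μ[|Bm])) :=
          (integral_map hT.aemeasurable (hegm' _)).symm
      _ = ∫ t, eℓ (g t) ∂(Measure.map φm (gaussianReal 0 1)) := by rw [Hm]
      _ = ∫ z, eℓ (g (φm z)) ∂(gaussianReal 0 1) :=
          integral_map hφmm.aemeasurable (hegm' _)
      _ = ∫ z, G (-z) ∂(gaussianReal 0 1) := integral_congr_ae (ae_of_all _ hptm)
      _ = ∫ z, G z ∂(Measure.map (fun z : ℝ => -z) (gaussianReal 0 1)) :=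
          (integral_map measurable_neg.aemeasurable
            (by rw [gauss_neg_map]; exact hGmeas.aestronglyMeasurable)).symm
      _ = ∫ z, G z ∂(gaussianReal 0 1) := by rw [gauss_neg_map]
  have IntP : Integrable (fun ω => eℓ (g (T ω))) (μ[|A]) ↔
      Integrable G (gaussianReal 0 1) := by
    have e1 : Integrable (fun ω => eℓ (g (T ω))) (μ[|A]) ↔
        Integrable (fun t => eℓ (g t)) (Measure.map T (μ[|A])) :=
      (integrable_map_measure (hegm' _) hT.aemeasurable).symm
    have e2 : Integrable (fun t => eℓ (g t)) (Measure.map φp (gaussianReal 0 1)) ↔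
        Integrable (fun z => eℓ (g (φp z))) (gaussianReal 0 1) :=
      integrable_map_measure (hegm' _) hφpm.aemeasurable
    rw [e1, Hp, e2]
    exact integrable_congr (ae_of_all _ hptp)
  have IntM : Integrable (fun ω => eℓ (g (T ω))) (μ[|Bm]) ↔
      Integrable G (gaussianReal 0 1) := by
    have e1 : Integrable (fun ω => eℓ (g (T ω))) (μ[|Bm]) ↔
        Integrable (fun t => eℓ (g t)) (Measure.map T (μ[|Bm])) :=
      (integrable_map_measure (hegm' _) hT.aemeasurable).symm
    have e2 : Integrable (fun t => eℓ (g t)) (Measure.map φm (gaussianReal 0 1)) ↔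
        Integrable (fun z => eℓ (g (φm z))) (gaussianReal 0 1) :=
      integrable_map_measure (hegm' _) hφmm.aemeasurable
    have e3 : Integrable (fun z => G (-z)) (gaussianReal 0 1) ↔
        Integrable G (gaussianReal 0 1) := by
      have e4 : Integrable G (Measure.map (fun z : ℝ => -z) (gaussianReal 0 1)) ↔
          Integrable (fun z => G (-z)) (gaussianReal 0 1) :=
        integrable_map_measure (by rw [gauss_neg_map]; exact hGmeas.aestronglyMeasurable)
          measurable_neg.aemeasurable
      rw [← e4, gauss_neg_map]
    rw [e1, Hm, e2, ← e3]
    exact integrable_congr (ae_of_all _ hptm)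
  -- final assembly
  rw [ha, hrefR]
  show ∫ ω, eℓ (g (T ω)) ∂μ = ∫ z, G z ∂(gaussianReal 0 1)
  by_cases hI : Integrable G (gaussianReal 0 1)
  · have i1 : Integrable (fun ω => eℓ (g (T ω))) (μ.restrict A) := by
      rw [hrA]
      exact (IntP.mpr hI).smul_measure h2net
    have i2 : Integrable (fun ω => eℓ (g (T ω))) (μ.restrict Bm) := by
      rw [hrB]
      exact (IntM.mpr hI).smul_measure h2net
    calc ∫ ω, eℓ (g (T ω)) ∂μ
        = ∫ ω, eℓ (g (T ω)) ∂(μ.restrict A + μ.restrict Bm) := by conv_lhs => rw [hμsplit]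
      _ = ∫ ω, eℓ (g (T ω)) ∂(μ.restrict A) + ∫ ω, eℓ (g (T ω)) ∂(μ.restrict Bm) :=
          integral_add_measure i1 i2
      _ = (1/2 : ℝ) * ∫ z, G z ∂(gaussianReal 0 1)
          + (1/2 : ℝ) * ∫ z, G z ∂(gaussianReal 0 1) := by
          rw [hrA, hrB, integral_smul_measure, integral_smul_measure, Ep, Em, h2tr]
          norm_num
      _ = ∫ z, G z ∂(gaussianReal 0 1) := by ring
  · have hnint : ¬ Integrable (fun ω => eℓ (g (T ω))) μ := by
      intro h
      apply hI
      have h1 : Integrable (fun ω => eℓ (g (T ω))) (μ.restrict A) := h.restrict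
      rw [hrA] at h1
      exact IntP.mp ((integrable_smul_measure h2ne0 h2net).mp h1)
    rw [integral_undef hnint, integral_undef hI]

/-- In the balanced two-class Gaussian model, for a proper-loss entropy `e_ℓ` symmetric about
`1/2`, the refinement error of `f(x) = σ(wᵀx)` equals
`E_{z ∼ N(0,1)}[e_ℓ(σ(a_w (z + a_w/2)))]`; in particular it is invariant under positive
rescaling of `w`. -/
theorem stmt14 {p : ℕ} {Ω : Type*} [MeasurableSpace Ω] {μ : Measure Ω}
    [IsProbabilityMeasure μ]
    (S : Matrix (Fin p) (Fin p) ℝ) (hS : S.PosDef) (μv : Fin p → ℝ)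
    (X : Ω → Fin p → ℝ) (Y : Ω → ℝ) (hX : Measurable X) (hY : Measurable Y)
    (hY1 : μ {ω | Y ω = 1} = 1 / 2) (hYm1 : μ {ω | Y ω = -1} = 1 / 2)
    (hpos : ∀ u : Fin p → ℝ, Measure.map (fun ω => u ⬝ᵥ X ω) (μ[|{ω | Y ω = 1}])
      = gaussianReal (u ⬝ᵥ μv) (Real.toNNReal (u ⬝ᵥ S.mulVec u)))
    (hneg : ∀ u : Fin p → ℝ, Measure.map (fun ω => u ⬝ᵥ X ω) (μ[|{ω | Y ω = -1}])
      = gaussianReal (-(u ⬝ᵥ μv)) (Real.toNNReal (u ⬝ᵥ S.mulVec u)))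
    (eℓ : ℝ → ℝ) (heℓ_meas : Measurable eℓ) (heℓ_symm : ∀ q : ℝ, eℓ q = eℓ (1 - q))
    (w : Fin p → ℝ) (hw : w ≠ 0) :
    refR μ X Y eℓ w
        = ∫ z, eℓ (sigmoid (expertise S μv w * (z + expertise S μv w / 2)))
            ∂(gaussianReal 0 1)
      ∧ ∀ s : ℝ, 0 < s → refR μ X Y eℓ (s • w) = refR μ X Y eℓ w := by
  constructor
  · exact refR_eq_aux S hS μv X Y hX hY hY1 hYm1 hpos hneg eℓ heℓ_meas heℓ_symm w hw
  · intro s hs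
    have hw' : s • w ≠ 0 := smul_ne_zero hs.ne' hw
    have hx : expertise S μv (s • w) = expertise S μv w := by
      have hnum : (s • w) ⬝ᵥ S.mulVec ((2:ℝ) • S⁻¹.mulVec μv)
          = s * (w ⬝ᵥ S.mulVec ((2:ℝ) • S⁻¹.mulVec μv)) := by
        rw [smul_dotProduct, smul_eq_mul]
      have hden : (s • w) ⬝ᵥ S.mulVec (s • w) = s^2 * (w ⬝ᵥ S.mulVec w) := by
        rw [smul_dotProduct, Matrix.mulVec_smul, dotProduct_smul, smul_eq_mul, smul_eq_mul]
        ring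
      unfold expertise
      rw [hnum, hden, Real.sqrt_mul (sq_nonneg s), Real.sqrt_sq hs.le,
        mul_div_mul_left _ _ hs.ne']
    rw [refR_eq_aux S hS μv X Y hX hY hY1 hYm1 hpos hneg eℓ heℓ_meas heℓ_symm (s • w) hw',
      refR_eq_aux S hS μv X Y hX hY hY1 hYm1 hpos hneg eℓ heℓ_meas heℓ_symm w hw, hx]
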